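/- Define the bonus at the root of a tree as B = W_root - ∑_{j ∈ children(root)} γ_{j→root}. Under the max-product recursion on a rooted tree of odd depth t with leaf boundary conditions 0 ≤ L ≤ W, the bonuses satisfy B(0) ≤ B(L) ≤ B(W), where B(0), B(L), B(W) are the bonuses under boundary conditions all-zero, L, and all-weights respectively. -/

import Mathlib

/-- A rooted computation tree: a leaf carries a weight `w` and a boundary value `L`;
an internal node carries a weight `w` and a list of child subtrees. -/
inductive MPTree where
  | leaf (w : ℝ) (L : ℝ) : MPTree
  | node (w : ℝ) (children : List MPTree) : MPTree

/-- The max-product message sent by the root of a tree to its parent. -/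
def MPTree.msg : MPTree → ℝ
  | .leaf w L => max 0 (w - L)
  | .node w cs => max 0 (w - (cs.attach.map fun c => c.1.msg).sum)
decreasing_by
  have := List.sizeOf_lt_of_mem c.2
  simp only [MPTree.node.sizeOf_spec]
  omega

/-- `BLE T T'`: same shape and weights, with leaf boundary conditions
`L, L'` satisfying `0 ≤ L ≤ L' ≤ w` componentwise. -/
inductive MPTree.BLE : MPTree → MPTree → Prop
  | leaf {w L L' : ℝ} : 0 ≤ L → L ≤ L' → L' ≤ w → MPTree.BLE (.leaf w L) (.leaf w L')
  | node {w : ℝ} {cs cs' : List MPTree} : List.Forall₂ MPTree.BLE cs cs' →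
      MPTree.BLE (.node w cs) (.node w cs')

/-- All (boundary-carrying) leaves of the tree are at depth exactly `t`. -/
inductive MPTree.UniformDepth : ℕ → MPTree → Prop
  | leaf {w L : ℝ} : MPTree.UniformDepth 0 (.leaf w L)
  | node {t : ℕ} {w : ℝ} {cs : List MPTree} : (∀ c ∈ cs, MPTree.UniformDepth t c) →
      MPTree.UniformDepth (t + 1) (.node w cs)

/-- All leaf boundary values are `0`. -/
inductive MPTree.BndZero : MPTree → Prop
  | leaf {w : ℝ} : MPTree.BndZero (.leaf w 0)
  | node {w : ℝ} {cs : List MPTree} : (∀ c ∈ cs, MPTree.BndZero c) →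
      MPTree.BndZero (.node w cs)

/-- All leaf boundary values equal the leaf weights. -/
inductive MPTree.BndFull : MPTree → Prop
  | leaf {w : ℝ} : MPTree.BndFull (.leaf w w)
  | node {w : ℝ} {cs : List MPTree} : (∀ c ∈ cs, MPTree.BndFull c) →
      MPTree.BndFull (.node w cs)

/-- The bonus at the root: root weight minus the sum of the children's messages. -/
def MPTree.rootBonus (w : ℝ) (cs : List MPTree) : ℝ :=
  w - (cs.map MPTree.msg).sum


lemma MPTree.msg_node (w : ℝ) (cs : List MPTree) :
    MPTree.msg (.node w cs) = max 0 (w - (cs.map MPTree.msg).sum) := by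
  rw [MPTree.msg]; congr 2; rw [List.map_attach_eq_pmap]; simp

lemma sum_le_of_forall2 {l l' : List MPTree}
    (h : List.Forall₂ (fun a b => MPTree.msg a ≤ MPTree.msg b) l l') :
    (l.map MPTree.msg).sum ≤ (l'.map MPTree.msg).sum := by
  induction h with
  | nil => simp
  | cons hab _ ih => simpa using add_le_add hab ih

lemma key : ∀ (d : ℕ) (T T' : MPTree), MPTree.UniformDepth d T → MPTree.BLE T T' →
    (Even d → T'.msg ≤ T.msg) ∧ (Odd d → T.msg ≤ T'.msg) := by
  intro d
  induction d with
  | zero =>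
    intro T T' hd hb
    cases hd
    cases hb with
    | leaf h0 hLL hLw =>
      constructor
      · intro _
        simp only [MPTree.msg]
        exact max_le_max le_rfl (by linarith)
      · intro h; exact absurd h (by simp)
  | succ n ih =>
    intro T T' hd hb
    cases hb with
    | leaf h0 hLL hLw => cases hd
    | node hf =>
      rename_i w cs cs'
      cases hd with
      | node hcs =>
        have hmono : List.Forall₂ (fun a b => (Even n → MPTree.msg b ≤ MPTree.msg a) ∧
            (Odd n → MPTree.msg a ≤ MPTree.msg b)) cs cs' := by
          induction hf with
          | nil => exact List.Forall₂.nil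
          | cons hab htail ihl =>
            rename_i a b l l'
            exact List.Forall₂.cons
              (ih a b (hcs a (by simp)) hab)
              (ihl (fun c hc => hcs c (by simp [hc])))
        constructor
        · intro he
          have hn : Odd n := by
            rcases Nat.even_or_odd n with h | h
            · exact absurd (h.add_one) (by simpa using he)
            · exact h
          have : (cs.map MPTree.msg).sum ≤ (cs'.map MPTree.msg).sum :=
            sum_le_of_forall2 (hmono.imp fun {a b} h => h.2 hn)
          rw [MPTree.msg_node, MPTree.msg_node]
          exact max_le_max le_rfl (by linarith)
        · intro ho
          have hn : Even n := by
            rcases Nat.even_or_odd n with h | h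
            · exact h
            · exact absurd (h.add_one) (by simpa using ho)
          have : (cs'.map MPTree.msg).sum ≤ (cs.map MPTree.msg).sum :=
            sum_le_of_forall2 (hmono.imp fun {a b} h => h.1 hn).flip
          rw [MPTree.msg_node, MPTree.msg_node]
          exact max_le_max le_rfl (by linarith)

lemma forall2_mem_right {R : MPTree → MPTree → Prop} :
    ∀ {l l' : List MPTree}, List.Forall₂ R l l' → ∀ {b}, b ∈ l' → ∃ a ∈ l, R a b := by
  intro l l' h
  induction h with
  | nil => intro b hb; simp at hb
  | cons hab htail ih =>
    intro b hb
    rcases List.mem_cons.mp hb with h | h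
    · subst h; exact ⟨_, by simp, hab⟩
    · obtain ⟨a, ha, hr⟩ := ih h
      exact ⟨a, by simp [ha], hr⟩


lemma MPTree.BLE.uniformDepth : ∀ (d : ℕ) (T T' : MPTree),
    MPTree.UniformDepth d T → MPTree.BLE T T' → MPTree.UniformDepth d T' := by
  intro d
  induction d with
  | zero =>
    intro T T' hd hb
    cases hd; cases hb; exact MPTree.UniformDepth.leaf
  | succ n ih =>
    intro T T' hd hb
    cases hb with
    | leaf h0 hLL hLw => cases hd
    | node hf =>
      cases hd with
      | node hcs =>
        refine MPTree.UniformDepth.node fun c' hc' => ?_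
        obtain ⟨c, hc, hbc⟩ := forall2_mem_right hf hc'
        exact ih c c' (hcs c hc) hbc


lemma sum_msg_antitone {n : ℕ} (hn : Even n) :
    ∀ {cs cs' : List MPTree}, (∀ c ∈ cs, MPTree.UniformDepth n c) →
    List.Forall₂ MPTree.BLE cs cs' →
    (cs'.map MPTree.msg).sum ≤ (cs.map MPTree.msg).sum := by
  intro cs cs' hcs hf
  induction hf with
  | nil => simp
  | cons hab htail ih =>
    rename_i a b l l'
    have h1 := (key n a b (hcs a (by simp)) hab).1 hn
    have h2 := ih (fun c hc => hcs c (by simp [hc]))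
    simpa using add_le_add h1 h2

/-- **Monotonicity of the root bonus in the boundary condition (odd depth).**
For a rooted tree of odd depth `t` and leaf boundary conditions `0 ≤ L ≤ W`,
the root bonuses satisfy `B(0) ≤ B(L) ≤ B(W)`. -/
theorem mp_root_bonus_monotone
    (t : ℕ) (ht : Odd t) (w : ℝ) (cs0 csL csW : List MPTree)
    (hdepth : MPTree.UniformDepth t (.node w cs0))
    (h0 : MPTree.BndZero (.node w cs0)) (hW : MPTree.BndFull (.node w csW))
    (h0L : MPTree.BLE (.node w cs0) (.node w csL))
    (hLW : MPTree.BLE (.node w csL) (.node w csW)) :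
    MPTree.rootBonus w cs0 ≤ MPTree.rootBonus w csL ∧
    MPTree.rootBonus w csL ≤ MPTree.rootBonus w csW := by
  cases hdepth with
  | node hcs =>
    rename_i n
    have hn : Even n := by
      rcases Nat.even_or_odd n with h | h
      · exact h
      · exact absurd (h.add_one) (by simpa using ht)
    cases h0L with
    | node hf0L =>
      cases hLW with
      | node hfLW =>
        have hcsL : ∀ c ∈ csL, MPTree.UniformDepth n c := by
          intro c hc
          obtain ⟨c0, hc0, hb⟩ := forall2_mem_right hf0L hc
          exact MPTree.BLE.uniformDepth n c0 c (hcs c0 hc0) hb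
        have h1 := sum_msg_antitone hn hcs hf0L
        have h2 := sum_msg_antitone hn hcsL hfLW
        exact ⟨sub_le_sub_left h1 w, sub_le_sub_left h2 w⟩
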